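/- arXiv:1802.02730 — 4 statements merged into one kernel-verified Lean document; each statement's English description precedes it below -/
import Mathlib

section
/- Let X be a positive semidefinite n×n complex matrix, Z a positive semidefinite m×m complex matrix, and Y an n×m complex matrix. The block matrix A = [[X, Y],[Yᴴ, Z]] is positive semidefinite if and only if there exists a contraction Γ (an n×m complex matrix with operator norm at most 1) such that Y = X^{1/2} · Γ · Z^{1/2}, where X^{1/2} and Z^{1/2} denote the unique positive semidefinite square roots of X and Z. -/
open scoped Matrix Matrix.Norms.L2Operator ComplexOrder

namespace Matrix.PosSemidef

/-- The positive semidefinite square root of a positive semidefinite matrix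
(the definition removed from Mathlib, restored verbatim). -/
noncomputable def sqrt {n 𝕜 : Type*} [Fintype n] [DecidableEq n] [RCLike 𝕜]
    {A : Matrix n n 𝕜} (hA : PosSemidef A) : Matrix n n 𝕜 :=
  hA.1.eigenvectorUnitary.1 * diagonal ((↑) ∘ (√·) ∘ hA.1.eigenvalues) *
  (star hA.1.eigenvectorUnitary : Matrix n n 𝕜)

end Matrix.PosSemidef

namespace BlockPSDAux

open Matrix

variable {ι : Type*} [Fintype ι] [DecidableEq ι]

/-- Pseudoinverse of a Hermitian matrix, via the spectral theorem. -/
noncomputable def pinv {P : Matrix ι ι ℂ} (hP : P.IsHermitian) : Matrix ι ι ℂ :=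
  (hP.eigenvectorUnitary : Matrix ι ι ℂ) *
    diagonal (fun i => if hP.eigenvalues i = 0 then 0 else ((hP.eigenvalues i : ℂ))⁻¹) *
    star (hP.eigenvectorUnitary : Matrix ι ι ℂ)

lemma conj_mul_conj (U : Matrix ι ι ℂ) (hU : star U * U = 1) (d e : ι → ℂ) :
    (U * diagonal d * star U) * (U * diagonal e * star U)
      = U * diagonal (fun i => d i * e i) * star U := by
  simp only [mul_assoc]
  rw [← mul_assoc (star U) U, hU, one_mul, ← mul_assoc (diagonal d), diagonal_mul_diagonal]

lemma conj_conjTranspose (U : Matrix ι ι ℂ) (d : ι → ℂ) :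
    (U * diagonal d * star U)ᴴ = U * diagonal (fun i => star (d i)) * star U := by
  rw [conjTranspose_mul, conjTranspose_mul, diagonal_conjTranspose,
    ← star_eq_conjTranspose U, ← star_eq_conjTranspose (star U), star_star, mul_assoc]
  rfl

lemma pinv_conjTranspose {P : Matrix ι ι ℂ} (hP : P.IsHermitian) : (pinv hP)ᴴ = pinv hP := by
  unfold pinv
  rw [conj_conjTranspose]
  have : (fun i => star (if hP.eigenvalues i = 0 then 0 else ((hP.eigenvalues i : ℂ))⁻¹))
      = fun i => if hP.eigenvalues i = 0 then 0 else ((hP.eigenvalues i : ℂ))⁻¹ := by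
    funext i
    split
    · simp
    · rw [← Complex.ofReal_inv]
      exact Complex.conj_ofReal _
  rw [this]

end BlockPSDAux

namespace BlockPSDAux2
open Matrix BlockPSDAux

variable {ι : Type*} [Fintype ι] [DecidableEq ι] {P : Matrix ι ι ℂ} (hP : P.IsHermitian)

lemma spectral : P = (hP.eigenvectorUnitary : Matrix ι ι ℂ) *
    diagonal (fun i => ((hP.eigenvalues i : ℝ) : ℂ)) *
    star (hP.eigenvectorUnitary : Matrix ι ι ℂ) :=
  hP.spectral_theorem

lemma star_mul_self_eq_one :
    star (hP.eigenvectorUnitary : Matrix ι ι ℂ) * (hP.eigenvectorUnitary : Matrix ι ι ℂ) = 1 :=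
  Unitary.coe_star_mul_self _

lemma mul_pinv_eq : P * pinv hP = (hP.eigenvectorUnitary : Matrix ι ι ℂ) *
    diagonal (fun i => if hP.eigenvalues i = 0 then 0 else 1) *
    star (hP.eigenvectorUnitary : Matrix ι ι ℂ) := by
  refine (congrArg (fun M => M * pinv hP) (spectral hP)).trans ?_
  unfold pinv
  rw [conj_mul_conj _ (star_mul_self_eq_one hP)]
  have : (fun i => ((hP.eigenvalues i : ℝ) : ℂ) *
      (if hP.eigenvalues i = 0 then 0 else ((hP.eigenvalues i : ℂ))⁻¹))
      = fun i => if hP.eigenvalues i = 0 then (0 : ℂ) else 1 := by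
    funext i
    split
    · simp
    · exact mul_inv_cancel₀ (Complex.ofReal_ne_zero.mpr (by assumption))
  rw [this]

lemma pinv_mul_eq : pinv hP * P = (hP.eigenvectorUnitary : Matrix ι ι ℂ) *
    diagonal (fun i => if hP.eigenvalues i = 0 then 0 else 1) *
    star (hP.eigenvectorUnitary : Matrix ι ι ℂ) := by
  refine (congrArg (fun M => pinv hP * M) (spectral hP)).trans ?_
  unfold pinv
  rw [conj_mul_conj _ (star_mul_self_eq_one hP)]
  have : (fun i => (if hP.eigenvalues i = 0 then 0 else ((hP.eigenvalues i : ℂ))⁻¹) *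
      ((hP.eigenvalues i : ℝ) : ℂ))
      = fun i => if hP.eigenvalues i = 0 then (0 : ℂ) else 1 := by
    funext i
    split
    · simp
    · exact inv_mul_cancel₀ (Complex.ofReal_ne_zero.mpr (by assumption))
  rw [this]

lemma pinv_mul_comm : pinv hP * P = P * pinv hP :=
  (pinv_mul_eq hP).trans (mul_pinv_eq hP).symm

lemma proj_conjTranspose : (P * pinv hP)ᴴ = P * pinv hP := by
  rw [mul_pinv_eq hP, conj_conjTranspose]
  have : (fun i => star (if hP.eigenvalues i = 0 then (0:ℂ) else 1))
      = fun i => if hP.eigenvalues i = 0 then (0 : ℂ) else 1 := by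
    funext i; split <;> simp
  rw [this]

lemma proj_idem : (P * pinv hP) * (P * pinv hP) = P * pinv hP := by
  rw [mul_pinv_eq hP, conj_mul_conj _ (star_mul_self_eq_one hP)]
  have : (fun i => (if hP.eigenvalues i = 0 then (0:ℂ) else 1) *
      (if hP.eigenvalues i = 0 then (0:ℂ) else 1))
      = fun i => if hP.eigenvalues i = 0 then (0 : ℂ) else 1 := by
    funext i; split <;> simp
  rw [this]

lemma mul_proj : P * (P * pinv hP) = P := by
  rw [mul_pinv_eq hP]
  refine (congrArg (fun M => M * _) (spectral hP)).trans ?_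
  rw [conj_mul_conj _ (star_mul_self_eq_one hP)]
  have : (fun i => ((hP.eigenvalues i : ℝ) : ℂ) *
      (if hP.eigenvalues i = 0 then (0:ℂ) else 1))
      = fun i => ((hP.eigenvalues i : ℝ) : ℂ) := by
    funext i
    split
    · simp_all
    · simp
  rw [this]
  exact (spectral hP).symm

lemma proj_mul : (P * pinv hP) * P = P := by
  rw [mul_pinv_eq hP]
  refine (congrArg (fun M => _ * M) (spectral hP)).trans ?_
  rw [conj_mul_conj _ (star_mul_self_eq_one hP)]
  have : (fun i => (if hP.eigenvalues i = 0 then (0:ℂ) else 1) *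
      ((hP.eigenvalues i : ℝ) : ℂ))
      = fun i => ((hP.eigenvalues i : ℝ) : ℂ) := by
    funext i
    split
    · simp_all
    · simp
  rw [this]
  exact (spectral hP).symm

lemma norm_proj_le_one : ‖P * pinv hP‖ ≤ 1 := by
  have h2 : ‖P * pinv hP‖ * ‖P * pinv hP‖ = ‖P * pinv hP‖ := by
    rw [← l2_opNorm_conjTranspose_mul_self, proj_conjTranspose hP, proj_idem hP]
  nlinarith [norm_nonneg (P * pinv hP)]

lemma mul_proj_eq_self {κ : Type*} [Fintype κ] {C : Matrix κ ι ℂ}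
    (h : Cᴴ * C = P * P) : C * (P * pinv hP) = C := by
  have hQ1 := proj_mul hP
  have hQ2 := mul_proj hP
  have e2 : (P * pinv hP) * (Cᴴ * C) = P * P := by rw [h, ← mul_assoc, hQ1]
  have e3 : (Cᴴ * C) * (P * pinv hP) = P * P := by rw [h, mul_assoc, hQ2]
  have e1 : (P * pinv hP) * (Cᴴ * C) * (P * pinv hP) = P * P := by
    rw [e2, mul_assoc, hQ2]
  have c1 : (P * P) * (P * pinv hP - 1) = 0 := by
    rw [mul_sub, mul_one, mul_assoc, hQ2, sub_self]
  have hN : C * (P * pinv hP) - C = C * (P * pinv hP - 1) := by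
    rw [Matrix.mul_sub, Matrix.mul_one]
  have key : (C * (P * pinv hP) - C)ᴴ * (C * (P * pinv hP) - C) = 0 := by
    rw [hN, conjTranspose_mul, Matrix.mul_assoc, ← Matrix.mul_assoc Cᴴ C, h, c1, Matrix.mul_zero]
  have := conjTranspose_mul_self_eq_zero.mp key
  rwa [sub_eq_zero] at this

end BlockPSDAux2

namespace Matrix.PosSemidef
open Matrix BlockPSDAux BlockPSDAux2

variable {ι : Type*} [Fintype ι] [DecidableEq ι]

lemma posSemidef_sqrt {A : Matrix ι ι ℂ} (hA : PosSemidef A) : PosSemidef hA.sqrt := by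
  unfold sqrt
  have := (posSemidef_diagonal_iff (d := ((↑) ∘ (√·) ∘ hA.1.eigenvalues : ι → ℂ))).mpr
    (fun i => by simp only [Function.comp_apply]; exact_mod_cast Real.sqrt_nonneg _)
  exact this.mul_mul_conjTranspose_same _

lemma sqrt_mul_self {A : Matrix ι ι ℂ} (hA : PosSemidef A) : hA.sqrt * hA.sqrt = A := by
  unfold sqrt
  rw [conj_mul_conj _ (star_mul_self_eq_one hA.1)]
  conv_rhs => rw [spectral hA.1]
  congr 1; congr 1; congr 1
  funext i
  simp only [Function.comp_apply]
  rw [← RCLike.ofReal_mul, Real.mul_self_sqrt (hA.eigenvalues_nonneg i)]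
  rfl

end Matrix.PosSemidef

namespace BlockPSDAux3
open Matrix

lemma star_dot_self {κ : Type*} [Fintype κ] (v : κ → ℂ) :
    star v ⬝ᵥ v = ((∑ i, ‖v i‖ ^ 2 : ℝ) : ℂ) := by
  simp only [dotProduct, Pi.star_apply, Complex.ofReal_sum]
  congr 1
  funext i
  rw [Complex.star_def, ← Complex.normSq_eq_conj_mul_self, Complex.normSq_eq_norm_sq]

lemma posSemidef_one_sub {n m : ℕ} {Γ : Matrix (Fin n) (Fin m) ℂ} (hΓ : ‖Γ‖ ≤ 1) :
    (1 - Γᴴ * Γ).PosSemidef := by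
  refine posSemidef_iff_dotProduct_mulVec.mpr ⟨?_, ?_⟩
  · show (1 - Γᴴ * Γ)ᴴ = 1 - Γᴴ * Γ
    simp [conjTranspose_sub, conjTranspose_mul]
  · intro x
    have h1 : star x ⬝ᵥ ((1 - Γᴴ * Γ) *ᵥ x) = star x ⬝ᵥ x - star (Γ *ᵥ x) ⬝ᵥ (Γ *ᵥ x) := by
      rw [Matrix.sub_mulVec, dotProduct_sub, Matrix.one_mulVec]
      congr 1
      rw [← Matrix.mulVec_mulVec, Matrix.dotProduct_mulVec, Matrix.star_mulVec]
    have key : ∑ i, ‖(Γ *ᵥ x) i‖ ^ 2 ≤ ∑ i, ‖x i‖ ^ 2 := by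
      have h2 := Matrix.l2_opNorm_mulVec Γ ((WithLp.equiv 2 (Fin m → ℂ)).symm x)
      rw [EuclideanSpace.norm_eq, EuclideanSpace.norm_eq] at h2
      simp only [WithLp.equiv_symm_apply] at h2
      have h2' : √(∑ i, ‖(Γ *ᵥ x) i‖ ^ 2) ≤ ‖Γ‖ * √(∑ i, ‖x i‖ ^ 2) := h2
      have ha : (0:ℝ) ≤ ∑ i, ‖(Γ *ᵥ x) i‖ ^ 2 :=
        Finset.sum_nonneg fun i _ => sq_nonneg _
      have hb : (0:ℝ) ≤ ∑ i, ‖x i‖ ^ 2 :=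
        Finset.sum_nonneg fun i _ => sq_nonneg _
      have e1 := Real.sq_sqrt ha
      have e2 := Real.sq_sqrt hb
      have h3 : √(∑ i, ‖(Γ *ᵥ x) i‖ ^ 2) ≤ √(∑ i, ‖x i‖ ^ 2) :=
        h2'.trans (mul_le_of_le_one_left (Real.sqrt_nonneg _) hΓ)
      nlinarith [pow_le_pow_left₀ (Real.sqrt_nonneg (∑ i, ‖(Γ *ᵥ x) i‖ ^ 2)) h3 2]
    rw [h1, star_dot_self, star_dot_self, ← Complex.ofReal_sub]
    rw [Complex.zero_le_real]
    linarith

end BlockPSDAux3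


open Matrix BlockPSDAux BlockPSDAux2 BlockPSDAux3 in
/-- **Structure of a positive semidefinite block matrix.**
The block matrix `[[X, Y],[Yᴴ, Z]]` (with `X`, `Z` positive semidefinite) is positive
semidefinite if and only if `Y = X^{1/2} · Γ · Z^{1/2}` for some contraction `Γ`
(a matrix of operator norm at most 1). -/
theorem posSemidef_fromBlocks_iff_exists_contraction
    {n m : ℕ} {X : Matrix (Fin n) (Fin n) ℂ} {Z : Matrix (Fin m) (Fin m) ℂ}
    (hX : X.PosSemidef) (hZ : Z.PosSemidef) (Y : Matrix (Fin n) (Fin m) ℂ) :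
    (Matrix.fromBlocks X Y Yᴴ Z).PosSemidef ↔
      ∃ Γ : Matrix (Fin n) (Fin m) ℂ, ‖Γ‖ ≤ 1 ∧ Y = hX.sqrt * Γ * hZ.sqrt := by
  have hPh : (hX.sqrt).IsHermitian := hX.posSemidef_sqrt.1
  have hQh : (hZ.sqrt).IsHermitian := hZ.posSemidef_sqrt.1
  have hPh' : (hX.sqrt)ᴴ = hX.sqrt := hPh
  have hQh' : (hZ.sqrt)ᴴ = hZ.sqrt := hQh
  have hPP : hX.sqrt * hX.sqrt = X := hX.sqrt_mul_self
  have hQQ : hZ.sqrt * hZ.sqrt = Z := hZ.sqrt_mul_self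
  constructor
  · intro hA
    have hB : (hA.sqrt)ᴴ = hA.sqrt := hA.posSemidef_sqrt.1
    have hBB : hA.sqrt * hA.sqrt = Matrix.fromBlocks X Y Yᴴ Z := hA.sqrt_mul_self
    set B := hA.sqrt with hBdef
    set C := B.submatrix id Sum.inl with hCdef
    set D := B.submatrix id Sum.inr with hDdef
    have hmul : ∀ {κ₁ κ₂ : Type} (e₁ : κ₁ → (Fin n ⊕ Fin m)) (e₂ : κ₂ → (Fin n ⊕ Fin m)),
        (B.submatrix e₁ id) * (B.submatrix id e₂)
          = (Matrix.fromBlocks X Y Yᴴ Z).submatrix e₁ e₂ := by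
      intro κ₁ κ₂ e₁ e₂
      have := Matrix.submatrix_mul_equiv B B e₁ (Equiv.refl _) e₂
      simp only [Equiv.coe_refl] at this
      rw [this, hBB]
    have hCH : Cᴴ = B.submatrix Sum.inl id := by
      rw [hCdef, Matrix.conjTranspose_submatrix, hB]
    have hDH : Dᴴ = B.submatrix Sum.inr id := by
      rw [hDdef, Matrix.conjTranspose_submatrix, hB]
    have hCC : Cᴴ * C = hX.sqrt * hX.sqrt := by
      rw [hCH, hCdef, hmul, hPP]
      ext i j
      simp
    have hDD : Dᴴ * D = hZ.sqrt * hZ.sqrt := by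
      rw [hDH, hDdef, hmul, hQQ]
      ext i j
      simp
    have hCD : Cᴴ * D = Y := by
      rw [hCH, hDdef, hmul]
      ext i j
      simp
    refine ⟨pinv hPh * (Cᴴ * D) * pinv hQh, ?_, ?_⟩
    · -- norm bound
      have nC : ‖C * pinv hPh‖ ≤ 1 := by
        have e : (C * pinv hPh)ᴴ * (C * pinv hPh) = hX.sqrt * pinv hPh := by
          rw [conjTranspose_mul, pinv_conjTranspose hPh, Matrix.mul_assoc,
            ← Matrix.mul_assoc Cᴴ C, hCC, Matrix.mul_assoc hX.sqrt hX.sqrt,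
            ← Matrix.mul_assoc (pinv hPh), pinv_mul_comm hPh, proj_idem hPh]
        have h2 := Matrix.l2_opNorm_conjTranspose_mul_self (C * pinv hPh)
        rw [e] at h2
        have h3 := norm_proj_le_one hPh
        nlinarith [norm_nonneg (C * pinv hPh)]
      have nD : ‖D * pinv hQh‖ ≤ 1 := by
        have e : (D * pinv hQh)ᴴ * (D * pinv hQh) = hZ.sqrt * pinv hQh := by
          rw [conjTranspose_mul, pinv_conjTranspose hQh, Matrix.mul_assoc,
            ← Matrix.mul_assoc Dᴴ D, hDD, Matrix.mul_assoc hZ.sqrt hZ.sqrt,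
            ← Matrix.mul_assoc (pinv hQh), pinv_mul_comm hQh, proj_idem hQh]
        have h2 := Matrix.l2_opNorm_conjTranspose_mul_self (D * pinv hQh)
        rw [e] at h2
        have h3 := norm_proj_le_one hQh
        nlinarith [norm_nonneg (D * pinv hQh)]
      have nC' : ‖pinv hPh * Cᴴ‖ ≤ 1 := by
        have : (C * pinv hPh)ᴴ = pinv hPh * Cᴴ := by
          rw [conjTranspose_mul, pinv_conjTranspose hPh]
        rw [← this, Matrix.l2_opNorm_conjTranspose]
        exact nC
      have hre : pinv hPh * (Cᴴ * D) * pinv hQh = (pinv hPh * Cᴴ) * (D * pinv hQh) := by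
        simp only [Matrix.mul_assoc]
      rw [hre]
      calc ‖(pinv hPh * Cᴴ) * (D * pinv hQh)‖ ≤ ‖pinv hPh * Cᴴ‖ * ‖D * pinv hQh‖ :=
            Matrix.l2_opNorm_mul _ _
        _ ≤ 1 := mul_le_one₀ nC' (norm_nonneg _) nD
    · -- the factorization
      have hC1 : C * (hX.sqrt * pinv hPh) = C := mul_proj_eq_self hPh hCC
      have hC2 : (hX.sqrt * pinv hPh) * Cᴴ = Cᴴ := by
        have := congrArg Matrix.conjTranspose hC1
        rwa [conjTranspose_mul, proj_conjTranspose hPh] at this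
      have hD1 : D * (hZ.sqrt * pinv hQh) = D := mul_proj_eq_self hQh hDD
      calc Y = Cᴴ * D := hCD.symm
        _ = ((hX.sqrt * pinv hPh) * Cᴴ) * (D * (hZ.sqrt * pinv hQh)) := by rw [hC2, hD1]
        _ = hX.sqrt * (pinv hPh * (Cᴴ * D) * pinv hQh) * hZ.sqrt := by
            rw [← pinv_mul_comm hQh]
            simp only [Matrix.mul_assoc]
  · rintro ⟨Γ, hΓ, rfl⟩
    have h1 : (1 - Γᴴ * Γ).PosSemidef := posSemidef_one_sub hΓ
    have hK : (hZ.sqrt * (1 - Γᴴ * Γ) * (hZ.sqrt)ᴴ).PosSemidef :=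
      h1.mul_mul_conjTranspose_same hZ.sqrt
    have hSH : (hK.sqrt)ᴴ = hK.sqrt := hK.posSemidef_sqrt.1
    have hSS : hK.sqrt * hK.sqrt = hZ.sqrt * (1 - Γᴴ * Γ) * (hZ.sqrt)ᴴ := hK.sqrt_mul_self
    have b11 : hX.sqrtᴴ * hX.sqrt + (0 : Matrix (Fin m) (Fin n) ℂ)ᴴ
        * (0 : Matrix (Fin m) (Fin n) ℂ) = X := by
      rw [hPh, hPP]; simp
    have b12 : hX.sqrtᴴ * (Γ * hZ.sqrt) + (0 : Matrix (Fin m) (Fin n) ℂ)ᴴ * hK.sqrt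
        = hX.sqrt * Γ * hZ.sqrt := by
      rw [hPh]; simp [Matrix.mul_assoc]
    have b21 : (Γ * hZ.sqrt)ᴴ * hX.sqrt + hK.sqrtᴴ * (0 : Matrix (Fin m) (Fin n) ℂ)
        = (hX.sqrt * Γ * hZ.sqrt)ᴴ := by
      simp [conjTranspose_mul, hPh', Matrix.mul_assoc]
    have b22 : (Γ * hZ.sqrt)ᴴ * (Γ * hZ.sqrt) + hK.sqrtᴴ * hK.sqrt = Z := by
      rw [hSH, hSS, conjTranspose_mul, hQh']
      have e : hZ.sqrt * Γᴴ * (Γ * hZ.sqrt) + hZ.sqrt * (1 - Γᴴ * Γ) * hZ.sqrt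
          = hZ.sqrt * hZ.sqrt := by
        rw [Matrix.mul_sub, Matrix.sub_mul, Matrix.mul_one]
        simp only [Matrix.mul_assoc]
        abel
      rw [e]
      exact hQQ
    have key : (Matrix.fromBlocks hX.sqrt (Γ * hZ.sqrt) 0 hK.sqrt)ᴴ
          * (Matrix.fromBlocks hX.sqrt (Γ * hZ.sqrt) 0 hK.sqrt)
        = Matrix.fromBlocks X (hX.sqrt * Γ * hZ.sqrt) (hX.sqrt * Γ * hZ.sqrt)ᴴ Z := by
      rw [Matrix.fromBlocks_conjTranspose, Matrix.fromBlocks_multiply, b11, b12, b21, b22]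
    rw [← key]
    exact Matrix.posSemidef_conjTranspose_mul_self _
end

section
/- Let H and K be complex Hilbert spaces and let X, Y : H → K be continuous linear operators. The following are equivalent: (1) there exists a contraction Γ : K → K (a continuous linear operator with operator norm at most 1) such that X = Γ ∘ Y; (2) X*X ≤ Y*Y, i.e. the operator Y*Y − X*X is positive (self-adjoint with ⟪(Y*Y − X*X)h, h⟫ ≥ 0 for all h ∈ H). -/
set_option maxHeartbeats 1000000

open ContinuousLinearMap in
private lemma douglas_norm_le
    {H K : Type*} [NormedAddCommGroup H] [InnerProductSpace ℂ H] [CompleteSpace H]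
    [NormedAddCommGroup K] [InnerProductSpace ℂ K] [CompleteSpace K]
    (X Y : H →L[ℂ] K)
    (hpos : (ContinuousLinearMap.adjoint Y ∘L Y - ContinuousLinearMap.adjoint X ∘L X).IsPositive)
    (h : H) : ‖X h‖ ≤ ‖Y h‖ := by
  have h0 := hpos.2 h
  rw [ContinuousLinearMap.reApplyInnerSelf_apply] at h0
  simp only [ContinuousLinearMap.sub_apply, ContinuousLinearMap.comp_apply, inner_sub_left,
    ContinuousLinearMap.adjoint_inner_left, map_sub] at h0
  rw [inner_self_eq_norm_sq, inner_self_eq_norm_sq] at h0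
  nlinarith [norm_nonneg (X h), norm_nonneg (Y h)]

open ContinuousLinearMap in
/-- **Douglas-type factorization.** For continuous linear operators `X Y : H → K` between complex
Hilbert spaces, there exists a contraction `Γ : K → K` with `X = Γ ∘ Y` if and only if
`X*X ≤ Y*Y`, i.e. `Y*Y − X*X` is a positive operator. -/
theorem exists_contraction_factor_iff_adjoint_comp_le
    {H K : Type*} [NormedAddCommGroup H] [InnerProductSpace ℂ H] [CompleteSpace H]
    [NormedAddCommGroup K] [InnerProductSpace ℂ K] [CompleteSpace K]
    (X Y : H →L[ℂ] K) :
    (∃ Γ : K →L[ℂ] K, ‖Γ‖ ≤ 1 ∧ X = Γ.comp Y) ↔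
      (ContinuousLinearMap.adjoint Y ∘L Y - ContinuousLinearMap.adjoint X ∘L X).IsPositive := by
  constructor
  · rintro ⟨Γ, hΓ, rfl⟩
    constructor
    · rw [← ContinuousLinearMap.isSelfAdjoint_iff_isSymmetric, IsSelfAdjoint, star_sub]
      simp only [ContinuousLinearMap.star_eq_adjoint, ContinuousLinearMap.adjoint_comp,
        ContinuousLinearMap.adjoint_adjoint]
    · intro x
      rw [ContinuousLinearMap.reApplyInnerSelf_apply]
      simp only [ContinuousLinearMap.sub_apply, ContinuousLinearMap.comp_apply, inner_sub_left,
        ContinuousLinearMap.adjoint_inner_left, map_sub]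
      rw [inner_self_eq_norm_sq, inner_self_eq_norm_sq]
      have hx : ‖Γ (Y x)‖ ≤ ‖Y x‖ := by
        calc ‖Γ (Y x)‖ ≤ ‖Γ‖ * ‖Y x‖ := Γ.le_opNorm _
        _ ≤ 1 * ‖Y x‖ := by gcongr
        _ = ‖Y x‖ := one_mul _
      nlinarith [norm_nonneg (Γ (Y x)), norm_nonneg (Y x)]
  · intro hpos
    have hle : ∀ h, ‖X h‖ ≤ ‖Y h‖ := douglas_norm_le X Y hpos
    -- X vanishes on ker Y
    have hker : LinearMap.ker (Y : H →ₗ[ℂ] K) ≤ LinearMap.ker (X : H →ₗ[ℂ] K) := by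
      intro h hh
      simp only [LinearMap.mem_ker, ContinuousLinearMap.coe_coe] at *
      have := hle h
      rw [hh, norm_zero] at this
      exact norm_le_zero_iff.mp this
    have key : ∀ h h' : H, Y h = Y h' → X h = X h' := by
      intro h h' hyy
      have : ‖X h - X h'‖ ≤ ‖Y h - Y h'‖ := by
        rw [← map_sub, ← map_sub]; exact hle _
      rw [hyy, sub_self, norm_zero] at this
      exact sub_eq_zero.mp (norm_le_zero_iff.mp this)
    set R : Submodule ℂ K := LinearMap.range (Y : H →ₗ[ℂ] K) with hR
    have pick : ∀ v : R, ∃ h : H, Y h = (v : K) := fun v => v.2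
    let g₀ : R →ₗ[ℂ] K :=
      { toFun := fun v => X (pick v).choose
        map_add' := by
          intro a b
          have ha := (pick a).choose_spec
          have hb := (pick b).choose_spec
          have hab := (pick (a + b)).choose_spec
          rw [← map_add]
          apply key
          rw [hab, map_add, ha, hb]
          rfl
        map_smul' := by
          intro c a
          have ha := (pick a).choose_spec
          have hca := (pick (c • a)).choose_spec
          simp only [RingHom.id_apply]
          rw [← map_smul]
          apply key
          rw [hca, map_smul, ha]
          rfl }
    have hg₀ : ∀ h : H, g₀ ⟨Y h, LinearMap.mem_range_self _ h⟩ = X h := by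
      intro h
      apply key
      exact (pick ⟨Y h, LinearMap.mem_range_self _ h⟩).choose_spec
    have hg₀norm : ∀ v : R, ‖g₀ v‖ ≤ 1 * ‖v‖ := by
      intro v
      rw [one_mul]
      have hv := (pick v).choose_spec
      calc ‖X (pick v).choose‖ ≤ ‖Y (pick v).choose‖ := hle _
      _ = ‖(v : K)‖ := by rw [hv]
      _ = ‖v‖ := rfl
    let g : R →L[ℂ] K := g₀.mkContinuous 1 hg₀norm
    have hgnorm : ‖g‖ ≤ 1 := g₀.mkContinuous_norm_le zero_le_one hg₀norm
    set M : Submodule ℂ K := R.topologicalClosure with hM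
    -- inclusion map
    let e₀ : R →ₗ[ℂ] M := Submodule.inclusion R.le_topologicalClosure
    have he₀ : ∀ v : R, ‖e₀ v‖ = ‖v‖ := fun v => rfl
    let e : R →L[ℂ] M := e₀.mkContinuous 1 (fun v => by rw [he₀, one_mul])
    have h_e_bound : ∀ v : R, ‖v‖ ≤ (1 : NNReal) * ‖e v‖ := by
      intro v; rw [NNReal.coe_one, one_mul]; exact le_of_eq (he₀ v).symm
    have h_dense : DenseRange e := by
      rw [denseRange_iff_closure_range]
      ext m
      simp only [Set.mem_univ, iff_true]
      rw [mem_closure_iff_seq_limit] at *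
      have hm : (m : K) ∈ closure (R : Set K) := by
        rw [← Submodule.topologicalClosure_coe]
        exact m.2
      rw [mem_closure_iff_seq_limit] at hm
      obtain ⟨u, hu, hconv⟩ := hm
      refine ⟨fun n => e ⟨u n, hu n⟩, fun n => ⟨⟨u n, hu n⟩, rfl⟩, ?_⟩
      exact tendsto_subtype_rng.mpr hconv
    have h_ue : IsUniformInducing e :=
      (ContinuousLinearMap.isUniformEmbedding_of_bound e h_e_bound).isUniformInducing
    let ghat : M →L[ℂ] K := g.extend e
    have hghat_norm : ‖ghat‖ ≤ 1 := by
      have := ContinuousLinearMap.opNorm_extend_le g h_dense h_e_bound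
      calc ‖ghat‖ ≤ (1 : NNReal) * ‖g‖ := this
      _ = ‖g‖ := by rw [NNReal.coe_one, one_mul]
      _ ≤ 1 := hgnorm
    haveI hMc : CompleteSpace M := Submodule.topologicalClosure.completeSpace R
    let P : K →L[ℂ] M := M.orthogonalProjectionOnto
    refine ⟨ghat.comp P, ?_, ?_⟩
    · calc ‖ghat.comp P‖ ≤ ‖ghat‖ * ‖P‖ := ContinuousLinearMap.opNorm_comp_le _ _
      _ ≤ 1 * 1 := by
        exact mul_le_mul hghat_norm (Submodule.orthogonalProjectionOnto_norm_le M) (norm_nonneg P) zero_le_one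
      _ = 1 := one_mul 1
    · ext h
      have hmem : Y h ∈ M := R.le_topologicalClosure (LinearMap.mem_range_self _ h)
      have hP : P (Y h) = ⟨Y h, hmem⟩ := by
        exact Submodule.orthogonalProjectionOnto_mem_subspace_eq_self (⟨Y h, hmem⟩ : M)
      have hEe : e ⟨Y h, LinearMap.mem_range_self _ h⟩ = ⟨Y h, hmem⟩ := rfl
      simp only [ContinuousLinearMap.comp_apply, hP, ← hEe]
      rw [ContinuousLinearMap.extend_eq _ h_dense h_ue]
      show X h = g₀ _
      rw [hg₀]
end

section
/- Let H be a complex Hilbert space and let R : ℤ → L(H) be an operator-valued sequence with R₀ = I and R_{−n} = (R_n)* for all n, which is positive-definite in the sense that ∑_{i,j=0}^{N} ⟪R_{i−j} h_i, h_j⟫ ≥ 0 for every N and every finite family h_0, …, h_N ∈ H. Then there exist a complex Hilbert space K, a linear isometric embedding V : H → K, and an isometry U : K → K such that for all n ≥ 0 and all x, y ∈ H one has ⟪R_n x, y⟫ = ⟪Uⁿ (V x), V y⟫; equivalently R_n = P_H Uⁿ|_H, where P_H is the orthogonal projection of K onto the image of H (Naimark dilation theorem). -/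
open scoped ComplexOrder

universe u
set_option linter.unusedSectionVars false
set_option maxHeartbeats 1000000
variable {H : Type u} [NormedAddCommGroup H] [InnerProductSpace ℂ H] [CompleteSpace H]


noncomputable def nInner (R : ℤ → (H →L[ℂ] H)) (f g : ℕ →₀ H) : ℂ :=
  f.sum fun i x => g.sum fun j y => inner ℂ (R ((i : ℤ) - (j : ℤ)) x) y

lemma nInner_eq_sum (R : ℤ → (H →L[ℂ] H)) (f g : ℕ →₀ H) (s t : Finset ℕ)
    (hs : f.support ⊆ s) (ht : g.support ⊆ t) :
    nInner R f g = ∑ i ∈ s, ∑ j ∈ t, (inner ℂ (R ((i : ℤ) - (j : ℤ)) (f i)) (g j) : ℂ) := by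
  rw [nInner, Finsupp.sum]
  rw [Finset.sum_subset hs (by
    intro i _ hi
    rw [Finsupp.notMem_support_iff.1 hi]
    simp [Finsupp.sum])]
  refine Finset.sum_congr rfl fun i _ => ?_
  rw [Finsupp.sum]
  refine Finset.sum_subset ht fun j _ hj => ?_
  rw [Finsupp.notMem_support_iff.1 hj, inner_zero_right]

lemma nInner_conj_symm (R : ℤ → (H →L[ℂ] H))
    (hRadj : ∀ n : ℤ, R (-n) = ContinuousLinearMap.adjoint (R n)) (f g : ℕ →₀ H) :
    (starRingEnd ℂ) (nInner R g f) = nInner R f g := by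
  rw [nInner_eq_sum R g f g.support f.support subset_rfl subset_rfl,
    nInner_eq_sum R f g f.support g.support subset_rfl subset_rfl, map_sum]
  rw [Finset.sum_comm]
  refine Finset.sum_congr rfl fun j _ => ?_
  rw [map_sum]
  refine Finset.sum_congr rfl fun i _ => ?_
  rw [inner_conj_symm]
  have : R ((j : ℤ) - i) = ContinuousLinearMap.adjoint (R ((i : ℤ) - j)) := by
    rw [← hRadj, neg_sub]
  rw [this, ContinuousLinearMap.adjoint_inner_right]

lemma nInner_add_left (R : ℤ → (H →L[ℂ] H)) (f f' g : ℕ →₀ H) :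
    nInner R (f + f') g = nInner R f g + nInner R f' g := by
  rw [nInner_eq_sum R (f + f') g (f.support ∪ f'.support) g.support
      (Finsupp.support_add) subset_rfl,
    nInner_eq_sum R f g (f.support ∪ f'.support) g.support Finset.subset_union_left subset_rfl,
    nInner_eq_sum R f' g (f.support ∪ f'.support) g.support Finset.subset_union_right subset_rfl,
    ← Finset.sum_add_distrib]
  refine Finset.sum_congr rfl fun i _ => ?_
  rw [← Finset.sum_add_distrib]
  refine Finset.sum_congr rfl fun j _ => ?_
  rw [Finsupp.add_apply, map_add, inner_add_left]

lemma nInner_smul_left (R : ℤ → (H →L[ℂ] H)) (r : ℂ) (f g : ℕ →₀ H) :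
    nInner R (r • f) g = (starRingEnd ℂ) r * nInner R f g := by
  rw [nInner_eq_sum R (r • f) g f.support g.support (Finsupp.support_smul) subset_rfl,
    nInner_eq_sum R f g f.support g.support subset_rfl subset_rfl, Finset.mul_sum]
  refine Finset.sum_congr rfl fun i _ => ?_
  rw [Finset.mul_sum]
  refine Finset.sum_congr rfl fun j _ => ?_
  rw [Finsupp.smul_apply, map_smul, inner_smul_left]

lemma nInner_single_single (R : ℤ → (H →L[ℂ] H)) (m k : ℕ) (x y : H) :
    nInner R (Finsupp.single m x) (Finsupp.single k y)
      = inner ℂ (R ((m : ℤ) - (k : ℤ)) x) y := by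
  rw [nInner_eq_sum R _ _ {m} {k} Finsupp.support_single_subset Finsupp.support_single_subset]
  simp

lemma nInner_shift (R : ℤ → (H →L[ℂ] H)) (f g : ℕ →₀ H) :
    nInner R (Finsupp.mapDomain (· + 1) f) (Finsupp.mapDomain (· + 1) g) = nInner R f g := by
  have hinj : Function.Injective (· + 1 : ℕ → ℕ) := fun a b h => by simpa using h
  rw [nInner, Finsupp.sum_mapDomain_index_inj hinj]
  refine Finsupp.sum_congr fun i _ => ?_
  rw [Finsupp.sum_mapDomain_index_inj hinj]
  refine Finsupp.sum_congr fun j _ => ?_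
  congr 2
  push_cast
  ring_nf

lemma nInner_nonneg_re (R : ℤ → (H →L[ℂ] H))
    (hpos : ∀ (N : ℕ) (h : Fin (N + 1) → H),
      0 ≤ ∑ i : Fin (N + 1), ∑ j : Fin (N + 1),
            (inner ℂ (R ((i : ℤ) - (j : ℤ)) (h i)) (h j) : ℂ))
    (f : ℕ →₀ H) : 0 ≤ RCLike.re (nInner R f f) := by
  set N := f.support.sup id with hN
  have hsub : f.support ⊆ Finset.range (N + 1) := by
    intro i hi
    simp only [Finset.mem_range]
    exact Nat.lt_succ_of_le (Finset.le_sup (f := id) hi)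
  have key := hpos N (fun i => f i.val)
  have : ∑ i : Fin (N + 1), ∑ j : Fin (N + 1),
      (inner ℂ (R ((i : ℤ) - (j : ℤ)) (f i.val)) (f j.val) : ℂ) = nInner R f f := by
    rw [nInner_eq_sum R f f (Finset.range (N + 1)) (Finset.range (N + 1)) hsub hsub]
    rw [← Fin.sum_univ_eq_sum_range (fun i => ∑ j ∈ Finset.range (N + 1),
      (inner ℂ (R ((i : ℤ) - (j : ℤ)) (f i)) (f j) : ℂ)) (N + 1)]
    refine Finset.sum_congr rfl fun i _ => ?_
    rw [← Fin.sum_univ_eq_sum_range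
      (fun j => (inner ℂ (R ((i : ℤ) - (j : ℤ)) (f i.val)) (f j) : ℂ)) (N + 1)]
  rw [this] at key
  exact (Complex.le_def.1 key).1


/-- The pre-inner-product core on finitely supported sequences. -/
noncomputable def naimarkCore (R : ℤ → (H →L[ℂ] H))
    (hRadj : ∀ n : ℤ, R (-n) = ContinuousLinearMap.adjoint (R n))
    (hpos : ∀ (N : ℕ) (h : Fin (N + 1) → H),
      0 ≤ ∑ i : Fin (N + 1), ∑ j : Fin (N + 1),
            (inner ℂ (R ((i : ℤ) - (j : ℤ)) (h i)) (h j) : ℂ)) :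
    PreInnerProductSpace.Core ℂ (ℕ →₀ H) where
  inner := nInner R
  conj_inner_symm f g := nInner_conj_symm R hRadj f g
  re_inner_nonneg := nInner_nonneg_re R hpos
  add_left := nInner_add_left R
  smul_left f g r := nInner_smul_left R r f g


/-- **Naimark dilation theorem.** Let `R : ℤ → L(H)` be an operator-valued sequence on a complex
Hilbert space `H` with `R 0 = I`, `R (−n) = (R n)*`, and which is positive-definite in the sense
that `∑_{i,j} ⟪R_{i−j} h_i, h_j⟫ ≥ 0` for all finite families of vectors. Then there exist a
complex Hilbert space `K`, a linear isometric embedding `V : H → K` and an isometry `U : K → K`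
such that `⟪R_n x, y⟫ = ⟪Uⁿ (V x), V y⟫` for all `n ≥ 0`, i.e. `R_n = P_H Uⁿ |_H`. -/
theorem naimark_dilation {H : Type u}
    [NormedAddCommGroup H] [InnerProductSpace ℂ H] [CompleteSpace H]
    (R : ℤ → (H →L[ℂ] H)) (hR0 : R 0 = 1)
    (hRadj : ∀ n : ℤ, R (-n) = ContinuousLinearMap.adjoint (R n))
    (hpos : ∀ (N : ℕ) (h : Fin (N + 1) → H),
      0 ≤ ∑ i : Fin (N + 1), ∑ j : Fin (N + 1),
            (inner ℂ (R ((i : ℤ) - (j : ℤ)) (h i)) (h j) : ℂ)) :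
    ∃ (K : Type u) (_ : NormedAddCommGroup K) (_ : InnerProductSpace ℂ K) (_ : CompleteSpace K)
      (V : H →ₗᵢ[ℂ] K) (U : K →L[ℂ] K),
      Isometry U ∧
      ∀ (n : ℕ) (x y : H), (inner ℂ ((U ^ n) (V x)) (V y) : ℂ) = inner ℂ (R (n : ℤ) x) y := by
  classical
  letI c : PreInnerProductSpace.Core ℂ (ℕ →₀ H) := naimarkCore R hRadj hpos
  letI : Inner ℂ (ℕ →₀ H) := c.toInner
  letI : SeminormedAddCommGroup (ℕ →₀ H) := InnerProductSpace.Core.toSeminormedAddCommGroup (𝕜 := ℂ) (F := ℕ →₀ H)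
  letI : NormedSpace ℂ (ℕ →₀ H) := InnerProductSpace.Core.toNormedSpace (𝕜 := ℂ) (F := ℕ →₀ H)
  letI : InnerProductSpace ℂ (ℕ →₀ H) :=
    { norm_sq_eq_re_inner := fun x => by
        have h : ‖x‖ = Real.sqrt (RCLike.re (inner ℂ x x)) := rfl
        rw [h, Real.sq_sqrt (c.re_inner_nonneg x)]
      conj_inner_symm := c.conj_inner_symm
      add_left := c.add_left
      smul_left := c.smul_left }
  set K0 := SeparationQuotient (ℕ →₀ H) with hK0
  set K := UniformSpace.Completion K0 with hK
  -- the embedding V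
  let Vlin : H →ₗ[ℂ] K :=
    (UniformSpace.Completion.toComplₗᵢ (𝕜 := ℂ) (E := K0)).toLinearMap ∘ₗ
      ((SeparationQuotient.mkCLM ℂ (ℕ →₀ H)) : (ℕ →₀ H) →ₗ[ℂ] K0) ∘ₗ Finsupp.lsingle 0
  have hVlin : ∀ x : H, Vlin x =
      ((SeparationQuotient.mk (Finsupp.single 0 x) : K0) : K) := fun x => rfl
  have hIK : ∀ (m k : ℕ) (x y : H),
      (inner ℂ ((SeparationQuotient.mk (Finsupp.single m x) : K0) : K)
        ((SeparationQuotient.mk (Finsupp.single k y) : K0) : K) : ℂ)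
        = inner ℂ (R ((m : ℤ) - (k : ℤ)) x) y := by
    intro m k x y
    rw [UniformSpace.Completion.inner_coe, SeparationQuotient.inner_mk_mk]
    exact nInner_single_single R m k x y
  have hVnorm : ∀ x : H, ‖Vlin x‖ = ‖x‖ := by
    intro x
    have h1 : (inner ℂ (Vlin x) (Vlin x) : ℂ) = inner ℂ x x := by
      rw [hVlin, hIK 0 0 x x]
      norm_num [hR0]
    have h2 : ‖Vlin x‖ ^ 2 = ‖x‖ ^ 2 := by
      rw [InnerProductSpace.norm_sq_eq_re_inner (𝕜 := ℂ) (Vlin x),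
        InnerProductSpace.norm_sq_eq_re_inner (𝕜 := ℂ) x, h1]
    have := congrArg Real.sqrt h2
    rwa [Real.sqrt_sq (norm_nonneg _), Real.sqrt_sq (norm_nonneg _)] at this
  let V : H →ₗᵢ[ℂ] K := ⟨Vlin, hVnorm⟩
  -- the shift operator
  let S : (ℕ →₀ H) →ₗ[ℂ] (ℕ →₀ H) := Finsupp.lmapDomain H ℂ (· + 1)
  have hSapply : ∀ f, S f = Finsupp.mapDomain (· + 1) f := fun f => rfl
  have hSnorm : ∀ f : (ℕ →₀ H), ‖S f‖ = ‖f‖ := by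
    intro f
    have h1 : (inner ℂ (S f) (S f) : ℂ) = inner ℂ f f := nInner_shift R f f
    have h2 : ‖S f‖ ^ 2 = ‖f‖ ^ 2 := by
      rw [InnerProductSpace.norm_sq_eq_re_inner (𝕜 := ℂ) (S f),
        InnerProductSpace.norm_sq_eq_re_inner (𝕜 := ℂ) f, h1]
    have := congrArg Real.sqrt h2
    rwa [Real.sqrt_sq (norm_nonneg _), Real.sqrt_sq (norm_nonneg _)] at this
  let SLI : (ℕ →₀ H) →ₗᵢ[ℂ] (ℕ →₀ H) := ⟨S, hSnorm⟩
  let U0 : K0 →L[ℂ] K0 :=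
    (SeparationQuotient.mkCLM ℂ (ℕ →₀ H)) ∘L SLI.toContinuousLinearMap ∘L
      (SeparationQuotient.outCLM ℂ (ℕ →₀ H))
  have hU0 : ∀ f : (ℕ →₀ H), U0 (SeparationQuotient.mk f) = SeparationQuotient.mk (S f) := by
    intro f
    show SeparationQuotient.mk
      (S (SeparationQuotient.outCLM ℂ (ℕ →₀ H) (SeparationQuotient.mk f)))
      = SeparationQuotient.mk (S f)
    rw [SeparationQuotient.mk_eq_mk]
    have h1 : Inseparable (SeparationQuotient.outCLM ℂ (ℕ →₀ H) (SeparationQuotient.mk f)) f :=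
      SeparationQuotient.mk_eq_mk.1 (SeparationQuotient.mk_outCLM ℂ _)
    rw [EMetric.inseparable_iff]
    have h2 : edist (S (SeparationQuotient.outCLM ℂ (ℕ →₀ H) (SeparationQuotient.mk f))) (S f)
        = edist (SeparationQuotient.outCLM ℂ (ℕ →₀ H) (SeparationQuotient.mk f)) f :=
      SLI.isometry.edist_eq _ _
    rw [h2]
    exact EMetric.inseparable_iff.1 h1
  have hU0norm : ∀ q : K0, ‖U0 q‖ = ‖q‖ := by
    intro q
    obtain ⟨f, rfl⟩ := SeparationQuotient.surjective_mk q
    rw [hU0, SeparationQuotient.norm_mk, SeparationQuotient.norm_mk, hSnorm]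
  -- extend to the completion
  have hDense : DenseRange (UniformSpace.Completion.toComplL (𝕜 := ℂ) (E := K0) : K0 →L[ℂ] K) := by
    rw [UniformSpace.Completion.coe_toComplL]
    exact UniformSpace.Completion.denseRange_coe
  have hInd : IsUniformInducing
      (UniformSpace.Completion.toComplL (𝕜 := ℂ) (E := K0) : K0 →L[ℂ] K) := by
    rw [UniformSpace.Completion.coe_toComplL]
    exact (UniformSpace.Completion.isUniformEmbedding_coe K0).toIsUniformInducing
  let U : K →L[ℂ] K :=
    ((UniformSpace.Completion.toComplL (𝕜 := ℂ) (E := K0)) ∘L U0).extend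
      (UniformSpace.Completion.toComplL (𝕜 := ℂ) (E := K0))
  have hUcoe : ∀ q : K0, U (q : K) = ((U0 q : K0) : K) := by
    intro q
    have := ContinuousLinearMap.extend_eq
      ((UniformSpace.Completion.toComplL (𝕜 := ℂ) (E := K0)) ∘L U0)
      (e := UniformSpace.Completion.toComplL (𝕜 := ℂ) (E := K0)) hDense hInd q
    simpa [UniformSpace.Completion.coe_toComplL] using this
  have hUnorm : ∀ a : K, ‖U a‖ = ‖a‖ := by
    have hcl : IsClosed {a : K | ‖U a‖ = ‖a‖} :=
      isClosed_eq U.continuous.norm continuous_norm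
    intro a
    refine UniformSpace.Completion.denseRange_coe.induction_on a hcl ?_
    intro q
    rw [hUcoe q, UniformSpace.Completion.norm_coe, UniformSpace.Completion.norm_coe, hU0norm]
  have hUiso : Isometry U := AddMonoidHomClass.isometry_of_norm U hUnorm
  -- iterated action on singles
  have hUn : ∀ (n : ℕ) (x : H),
      (U ^ n) (V x) = ((SeparationQuotient.mk (Finsupp.single n x) : K0) : K) := by
    intro n x
    induction n with
    | zero => rw [pow_zero]; exact hVlin x
    | succ n ih =>
      rw [pow_succ', ContinuousLinearMap.mul_apply, ih, hUcoe, hU0, hSapply,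
        Finsupp.mapDomain_single]
  refine ⟨K, inferInstance, inferInstance, inferInstance, V, U, hUiso, ?_⟩
  intro n x y
  have hVy : V y = ((SeparationQuotient.mk (Finsupp.single 0 y) : K0) : K) := hVlin y
  rw [hUn n x, hVy, hIK n 0 x y]
  norm_num
end

section
/- Let 𝔰𝔬(n) be the real Lie algebra of skew-symmetric n×n real matrices (the skew-adjoint matrices for the transpose), with Lie bracket [X,Y] = XY − YX. The Killing form of 𝔰𝔬(n), defined by B(X,Y) = tr(ad(X) ∘ ad(Y)), satisfies B(X,Y) = (n−2) · tr(XY) for all X, Y ∈ 𝔰𝔬(n); equivalently, −B(X,Y) = (n−2) · tr(X Yᵀ). -/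
open scoped Matrix

attribute [local instance 100] LieRing.ofAssociativeRing

open Matrix LinearMap

namespace KillingSoAux

variable {n : ℕ}

/-- `M ↦ A * M * B` as a linear map. -/
noncomputable def lmr (A B : Matrix (Fin n) (Fin n) ℝ) :
    Matrix (Fin n) (Fin n) ℝ →ₗ[ℝ] Matrix (Fin n) (Fin n) ℝ :=
  (LinearMap.mulLeft ℝ A).comp (LinearMap.mulRight ℝ B)

@[simp] lemma lmr_apply (A B M : Matrix (Fin n) (Fin n) ℝ) : lmr A B M = A * M * B := by
  simp [lmr, mul_assoc]

lemma trace_lmr (A B : Matrix (Fin n) (Fin n) ℝ) :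
    LinearMap.trace ℝ _ (lmr A B) = A.trace * B.trace := by
  rw [LinearMap.trace_eq_matrix_trace ℝ (Matrix.stdBasis ℝ (Fin n) (Fin n))]
  rw [Matrix.trace]
  simp only [Matrix.diag_apply, LinearMap.toMatrix_apply, lmr_apply]
  rw [Fintype.sum_prod_type]
  simp only [Matrix.stdBasis_eq_single]
  have : ∀ (i j : Fin n),
      (Matrix.stdBasis ℝ (Fin n) (Fin n)).repr (A * single i j 1 * B) (i, j)
      = A i i * B j j := by
    intro i j
    have h : (A * single i j (1:ℝ) * B) i j = A i i * B j j := by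
      simp [Matrix.mul_apply, Matrix.single, Finset.sum_ite_eq, ite_and,
        Finset.mul_sum, Finset.sum_mul]
    simp [Matrix.stdBasis, h]
  simp only [this]
  rw [Matrix.trace, Matrix.trace, Finset.sum_mul_sum]
  simp [Matrix.diag]

/-- `M ↦ A * Mᵀ * B` as a linear map. -/
noncomputable def tmr (A B : Matrix (Fin n) (Fin n) ℝ) :
    Matrix (Fin n) (Fin n) ℝ →ₗ[ℝ] Matrix (Fin n) (Fin n) ℝ :=
  (lmr A B).comp (Matrix.transposeLinearEquiv (Fin n) (Fin n) ℝ ℝ).toLinearMap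

@[simp] lemma tmr_apply (A B M : Matrix (Fin n) (Fin n) ℝ) : tmr A B M = A * Mᵀ * B := by
  simp [tmr, Matrix.transposeLinearEquiv]

lemma trace_tmr (A B : Matrix (Fin n) (Fin n) ℝ) :
    LinearMap.trace ℝ _ (tmr A B) = (A * Bᵀ).trace := by
  rw [LinearMap.trace_eq_matrix_trace ℝ (Matrix.stdBasis ℝ (Fin n) (Fin n))]
  rw [Matrix.trace]
  simp only [Matrix.diag_apply, LinearMap.toMatrix_apply, tmr_apply]
  rw [Fintype.sum_prod_type]
  simp only [Matrix.stdBasis_eq_single]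
  have : ∀ (i j : Fin n),
      (Matrix.stdBasis ℝ (Fin n) (Fin n)).repr (A * (single i j 1)ᵀ * B) (i, j)
      = A i j * B i j := by
    intro i j
    have h : (A * (single i j (1:ℝ))ᵀ * B) i j = A i j * B i j := by
      simp [Matrix.mul_apply, Matrix.single, Matrix.transpose_apply, ite_and,
        Finset.mul_sum, Finset.sum_mul]
    simpa [Matrix.stdBasis] using h
  simp only [this]
  rw [Matrix.trace]
  simp [Matrix.diag, Matrix.mul_apply, Fintype.sum_prod_type]

/-- The submodule of symmetric matrices. -/
def symm (n : ℕ) : Submodule ℝ (Matrix (Fin n) (Fin n) ℝ) where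
  carrier := {M | Mᵀ = M}
  add_mem' := by intro a b ha hb; simp_all [Matrix.transpose_add]
  zero_mem' := by simp
  smul_mem' := by intro c a ha; simp_all [Matrix.transpose_smul]

lemma mem_symm {M : Matrix (Fin n) (Fin n) ℝ} : M ∈ symm n ↔ Mᵀ = M := Iff.rfl

end KillingSoAux

/-- The Lie algebra `𝔰𝔬(n)` of skew-symmetric real `n × n` matrices, realized as the Lie
subalgebra of matrices that are skew-adjoint with respect to the identity bilinear form. -/
noncomputable abbrev so (n : ℕ) : LieSubalgebra ℝ (Matrix (Fin n) (Fin n) ℝ) :=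
  skewAdjointMatricesLieSubalgebra (1 : Matrix (Fin n) (Fin n) ℝ)

namespace KillingSoAux

lemma mem_so {M : Matrix (Fin n) (Fin n) ℝ} : M ∈ so n ↔ Mᵀ = -M := by
  rw [mem_skewAdjointMatricesLieSubalgebra, mem_skewAdjointMatricesSubmodule]
  simp [Matrix.IsSkewAdjoint, Matrix.IsAdjointPair]

lemma isCompl_so_symm : IsCompl ((so n).toSubmodule) (symm n) := by
  constructor
  · rw [disjoint_iff]
    rw [Submodule.eq_bot_iff]
    rintro M hM
    rw [Submodule.mem_inf] at hM
    obtain ⟨h1, h2⟩ := hM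
    have h1' : Mᵀ = -M := mem_so.mp h1
    have h2' : Mᵀ = M := h2
    have : M = -M := by rw [← h1', h2']
    have h2M : (2 : ℝ) • M = 0 := by
      rw [two_smul]; nth_rewrite 2 [this]; simp
    simpa using (smul_eq_zero.mp h2M).resolve_left (by norm_num)
  · rw [codisjoint_iff, eq_top_iff]
    intro M _
    refine Submodule.mem_sup.mpr ⟨(2⁻¹ : ℝ) • (M - Mᵀ), ?_, (2⁻¹ : ℝ) • (M + Mᵀ), ?_, ?_⟩
    · refine Submodule.smul_mem _ _ ?_
      show (M - Mᵀ) ∈ so n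
      rw [mem_so]; simp [Matrix.transpose_sub]
    · refine Submodule.smul_mem _ _ ?_
      rw [mem_symm]; simp [Matrix.transpose_add, add_comm]
    · rw [← smul_add]
      rw [sub_add_add_cancel, ← two_smul ℝ M, smul_smul]
      norm_num

end KillingSoAux

open KillingSoAux in
/-- **The Killing form of `𝔰𝔬(n)`.** For skew-symmetric matrices `X, Y ∈ 𝔰𝔬(n)`, the Killing
form `B(X,Y) = tr(ad X ∘ ad Y)` equals `(n − 2)·tr(XY)`; equivalently,
`−B(X,Y) = (n − 2)·tr(X Yᵀ)`. -/
theorem killingForm_so_eq {n : ℕ} (X Y : so n) :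
    killingForm ℝ (so n) X Y =
        ((n : ℝ) - 2) * Matrix.trace ((X : Matrix (Fin n) (Fin n) ℝ) * (Y : Matrix (Fin n) (Fin n) ℝ))
      ∧
    -killingForm ℝ (so n) X Y =
        ((n : ℝ) - 2) *
          Matrix.trace ((X : Matrix (Fin n) (Fin n) ℝ) * (Y : Matrix (Fin n) (Fin n) ℝ)ᵀ) := by
  set A := (X : Matrix (Fin n) (Fin n) ℝ) with hA_def
  set B := (Y : Matrix (Fin n) (Fin n) ℝ) with hB_def
  have hA : Aᵀ = -A := mem_so.mp X.2
  have hB : Bᵀ = -B := mem_so.mp Y.2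
  -- the big endomorphism T : M ↦ [A,[B,M]] on all matrices
  set T : Matrix (Fin n) (Fin n) ℝ →ₗ[ℝ] Matrix (Fin n) (Fin n) ℝ :=
    lmr (A * B) 1 - lmr A B - lmr B A + lmr 1 (B * A) with hT_def
  have hT_apply : ∀ M, T M = A * (B * M - M * B) - (B * M - M * B) * A := by
    intro M
    simp only [hT_def, LinearMap.add_apply, LinearMap.sub_apply, lmr_apply]
    noncomm_ring
  set Tε : Matrix (Fin n) (Fin n) ℝ →ₗ[ℝ] Matrix (Fin n) (Fin n) ℝ :=
    tmr (A * B) 1 - tmr A B - tmr B A + tmr 1 (B * A) with hTe_def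
  have hTe_apply : ∀ M, Tε M = T Mᵀ := by
    intro M
    simp only [hTe_def, LinearMap.add_apply, LinearMap.sub_apply, tmr_apply, hT_apply]
    noncomm_ring
  -- trace of T on all matrices
  have trA : A.trace = 0 := by
    have := Matrix.trace_transpose A
    rw [hA] at this
    simp at this
    linarith [this]
  have trB : B.trace = 0 := by
    have := Matrix.trace_transpose B
    rw [hB] at this
    simp at this
    linarith [this]
  have htrT : LinearMap.trace ℝ _ T = 2 * n * (A * B).trace := by
    simp only [hT_def, map_add, map_sub, trace_lmr]
    rw [Matrix.trace_one, Matrix.trace_mul_comm B A, trA, trB, Fintype.card_fin]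
    ring
  have htrTe : LinearMap.trace ℝ _ Tε = 4 * (A * B).trace := by
    simp only [hTe_def, map_add, map_sub, trace_tmr]
    have h1 : ((A * B) * (1 : Matrix (Fin n) (Fin n) ℝ)ᵀ).trace = (A * B).trace := by
      simp
    have h2 : (A * Bᵀ).trace = -(A * B).trace := by rw [hB]; simp
    have h3 : (B * Aᵀ).trace = -(A * B).trace := by
      rw [hA]; simp [Matrix.trace_mul_comm B A]
    have h4 : ((1 : Matrix (Fin n) (Fin n) ℝ) * (B * A)ᵀ).trace = (A * B).trace := by
      rw [Matrix.one_mul, Matrix.trace_transpose, Matrix.trace_mul_comm B A]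
    rw [h1, h2, h3, h4]
    ring
  -- T preserves the skew and symmetric submodules
  have hmapso : Set.MapsTo T ((so n).toSubmodule : Set (Matrix (Fin n) (Fin n) ℝ))
      ((so n).toSubmodule) := by
    intro M hM
    have hM' : Mᵀ = -M := mem_so.mp hM
    have : T M ∈ so n := by
      rw [mem_so, hT_apply]
      simp only [Matrix.transpose_sub, Matrix.transpose_mul, hA, hB, hM']
      noncomm_ring
    exact this
  have hmapsymm : Set.MapsTo T ((symm n : Submodule ℝ (Matrix (Fin n) (Fin n) ℝ)) :
      Set (Matrix (Fin n) (Fin n) ℝ)) (symm n) := by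
    intro M hM
    have hM' : Mᵀ = M := hM
    show T M ∈ symm n
    rw [mem_symm, hT_apply]
    simp only [Matrix.transpose_sub, Matrix.transpose_mul, hA, hB, hM']
    noncomm_ring
  have hmapso' : Set.MapsTo Tε ((so n).toSubmodule : Set (Matrix (Fin n) (Fin n) ℝ))
      ((so n).toSubmodule) := by
    intro M hM
    have hM' : Mᵀ = -M := mem_so.mp hM
    have : Tε M = -(T M) := by rw [hTe_apply, hM', map_neg]
    show Tε M ∈ (so n).toSubmodule
    rw [this]
    exact neg_mem (hmapso hM)
  have hmapsymm' : Set.MapsTo Tε ((symm n : Submodule ℝ (Matrix (Fin n) (Fin n) ℝ)) :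
      Set (Matrix (Fin n) (Fin n) ℝ)) (symm n) := by
    intro M hM
    have hM' : Mᵀ = M := hM
    have : Tε M = T M := by rw [hTe_apply, hM']
    show Tε M ∈ symm n
    rw [this]
    exact hmapsymm hM
  -- internal direct sum decomposition indexed by Bool
  set N : Bool → Submodule ℝ (Matrix (Fin n) (Fin n) ℝ) :=
    fun b => bif b then (so n).toSubmodule else symm n with hN_def
  have hInt : DirectSum.IsInternal N := by
    rw [DirectSum.isInternal_submodule_iff_isCompl N (i := true) (j := false) (by decide)
      (by ext b; cases b <;> simp)]
    exact isCompl_so_symm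
  have hfT : ∀ b, Set.MapsTo T (N b) (N b) := by
    intro b; cases b
    · exact hmapsymm
    · exact hmapso
  have hfTe : ∀ b, Set.MapsTo Tε (N b) (N b) := by
    intro b; cases b
    · exact hmapsymm'
    · exact hmapso'
  have hsumT := LinearMap.trace_eq_sum_trace_restrict hInt hfT
  have hsumTe := LinearMap.trace_eq_sum_trace_restrict hInt hfTe
  rw [Fintype.sum_bool] at hsumT hsumTe
  -- the restrictions of Tε are ∓ restrictions of T
  have hrestr_so : Tε.restrict (hfTe true) = -(T.restrict (hfT true)) := by
    apply LinearMap.ext; intro M; apply Subtype.ext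
    have hM' : (M : Matrix (Fin n) (Fin n) ℝ)ᵀ = -(M : Matrix (Fin n) (Fin n) ℝ) :=
      mem_so.mp M.2
    rw [LinearMap.neg_apply]
    show Tε (M : Matrix (Fin n) (Fin n) ℝ) = -(T (M : Matrix (Fin n) (Fin n) ℝ))
    rw [hTe_apply, hM', map_neg]
  have hrestr_symm : Tε.restrict (hfTe false) = T.restrict (hfT false) := by
    apply LinearMap.ext; intro M; apply Subtype.ext
    have hM' : (M : Matrix (Fin n) (Fin n) ℝ)ᵀ = (M : Matrix (Fin n) (Fin n) ℝ) := M.2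
    show Tε (M : Matrix (Fin n) (Fin n) ℝ) = T (M : Matrix (Fin n) (Fin n) ℝ)
    rw [hTe_apply, hM']
  rw [hrestr_so, hrestr_symm] at hsumTe
  have hneg : LinearMap.trace ℝ (N true) (-(T.restrict (hfT true)))
      = - LinearMap.trace ℝ (N true) (T.restrict (hfT true)) := by
    exact map_neg (LinearMap.trace ℝ (↥(N true))) (T.restrict (hfT true))
  rw [hneg] at hsumTe
  -- deduce the trace on the skew part
  have key : LinearMap.trace ℝ (N true) (T.restrict (hfT true)) = ((n : ℝ) - 2) * (A * B).trace := by
    have e1 : LinearMap.trace ℝ (N true) (T.restrict (hfT true))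
        + LinearMap.trace ℝ (N false) (T.restrict (hfT false)) = 2 * n * (A * B).trace := by
      rw [← hsumT]; exact htrT
    have e2 : -LinearMap.trace ℝ (N true) (T.restrict (hfT true))
        + LinearMap.trace ℝ (N false) (T.restrict (hfT false)) = 4 * (A * B).trace := by
      rw [← hsumTe]; exact htrTe
    linarith [e1, e2]
  -- identify the Killing form with this trace
  have hkill : killingForm ℝ (so n) X Y
      = LinearMap.trace ℝ (N true) (T.restrict (hfT true)) := by
    rw [killingForm_apply_apply ℝ (so n) X Y]
    show LinearMap.trace ℝ (so n)
      (LieAlgebra.ad ℝ (so n) X ∘ₗ LieAlgebra.ad ℝ (so n) Y) = _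
    congr 1
    refine LinearMap.ext fun Z => ?_
    refine Subtype.ext ?_
    have : ((LieAlgebra.ad ℝ (so n) X ∘ₗ LieAlgebra.ad ℝ (so n) Y) Z : Matrix (Fin n) (Fin n) ℝ)
        = A * (B * (Z : Matrix (Fin n) (Fin n) ℝ) - (Z : Matrix (Fin n) (Fin n) ℝ) * B)
          - (B * (Z : Matrix (Fin n) (Fin n) ℝ) - (Z : Matrix (Fin n) (Fin n) ℝ) * B) * A := by
      simp only [LinearMap.comp_apply, LieAlgebra.ad_apply]
      rw [LieSubalgebra.coe_bracket, LieSubalgebra.coe_bracket]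
      simp [Ring.lie_def, mul_sub, sub_mul, hA_def, hB_def]
    rw [this]
    exact (hT_apply _).symm
  rw [hkill, key]
  constructor
  · rfl
  · rw [hB]
    rw [Matrix.mul_neg, Matrix.trace_neg]
    ring
end
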